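/- Consider the environment E with agents Ags = {A,B}, propositions Prop = {start, w, c}, actions Acts_A = Acts_B = {aw, ac, ap, skip}, states S = {s₀, s_w, s_c, s_wc}, initial states I = {s₀}, observations O_A(s) = O_B(s) = s for every s, interpretation π(s₀) = {start}, π(s_w) = {w}, π(s_c) = {c}, π(s_wc) = {w,c}, and transition relation: s₀ →^{(a,b)} s_w if a = b = aw; s₀ →^{(a,b)} s_c if a = b = ac; s₀ →^{(a,b)} s_wc if {a,b} = {aw,ac}; t →^{(a,b)} t for every t ∈ {s_w, s_c, s_wc} and every joint action (a,b); and s₀ →^{(a,b)} s₀ for every joint action (a,b) not of the three forms above. Each agent i ∈ {A,B} has the protocol template P_i = do start∧x_i → ac [] start∧¬x_i → aw [] ¬start → ap od. Then there is no substitution θ (assigning to each template variable x_i a boolean formula local to agent i) such that 𝓘(E,Pθ) ⊨ AG(θ(x_i) ⇔ K_i(AX w)) for both i = A and i = B; that is, the knowledge-based program with specification formulas AG(x_i ⇔ K_i AX w) for i ∈ {A,B} has no implementation in E. -/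

import Mathlib

namespace EpiSyn

/-- Syntax of CTL*K over atomic propositions `P` and agents `A`. -/
inductive Formula (P A : Type) : Type
  | atom  : P → Formula P A
  | neg   : Formula P A → Formula P A
  | or    : Formula P A → Formula P A → Formula P A
  | next  : Formula P A → Formula P A
  | untl  : Formula P A → Formula P A → Formula P A
  | all   : Formula P A → Formula P A
  | know  : A → Formula P A → Formula P A

/-- An interpreted system over global states `S`: a set of runs, an
indistinguishability relation on points for each agent (an equivalence
relation on points of the system), and an interpretation of propositions. -/
structure IS (S P A : Type) where
  runs : Set (ℕ → S)
  sim  : A → ((ℕ → S) × ℕ) → ((ℕ → S) × ℕ) → Prop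
  intp : S → Set P
  sim_refl : ∀ i r m, r ∈ runs → sim i (r, m) (r, m)
  sim_symm : ∀ i p q, p.1 ∈ runs → q.1 ∈ runs → sim i p q → sim i q p
  sim_trans : ∀ i p q u, p.1 ∈ runs → q.1 ∈ runs → u.1 ∈ runs →
      sim i p q → sim i q u → sim i p u

variable {S P A : Type}

/-- Bundle semantics of CTL*K at a point `(r, m)` of an interpreted system. -/
def sat (I : IS S P A) : Formula P A → (ℕ → S) → ℕ → Prop
  | .atom p, r, m => p ∈ I.intp (r m)
  | .neg φ, r, m => ¬ sat I φ r m
  | .or φ ψ, r, m => sat I φ r m ∨ sat I ψ r m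
  | .next φ, r, m => sat I φ r (m + 1)
  | .untl φ ψ, r, m =>
      ∃ m', m ≤ m' ∧ sat I ψ r m' ∧ ∀ k, m ≤ k → k < m' → sat I φ r k
  | .all φ, r, m => ∀ r' ∈ I.runs, (∀ k, k ≤ m → r' k = r k) → sat I φ r' m
  | .know i φ, r, m => ∀ r' ∈ I.runs, ∀ m', I.sim i (r', m') (r, m) → sat I φ r' m'

/-- `I ⊨ φ` : satisfaction at time `0` of every run. -/
def valid (I : IS S P A) (φ : Formula P A) : Prop := ∀ r ∈ I.runs, sat I φ r 0

/-- `I ⊆ I'` : same states and interpretation, fewer runs, and the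
indistinguishability relations of `I` are the restrictions of those of `I'`. -/
def Subsystem (I I' : IS S P A) : Prop :=
  I.runs ⊆ I'.runs ∧ I.intp = I'.intp ∧
  ∀ (i : A) (r : ℕ → S) (m : ℕ) (r' : ℕ → S) (m' : ℕ), r ∈ I.runs → r' ∈ I.runs →
    (I.sim i (r, m) (r', m') ↔ I'.sim i (r, m) (r', m'))

/-- `okPol φ b` : when `φ` occurs in a context of polarity `b`
(`true` = under an even number of negations), every occurrence of a
knowledge operator or of the branching operator `all` in `φ` is in
positive position (under an even number of negations overall). -/
def okPol : Formula P A → Bool → Prop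
  | .atom _, _ => True
  | .neg φ, b => okPol φ (!b)
  | .or φ ψ, b => okPol φ b ∧ okPol ψ b
  | .next φ, b => okPol φ b
  | .untl φ ψ, b => okPol φ b ∧ okPol ψ b
  | .all φ, b => b = true ∧ okPol φ b
  | .know _ φ, b => b = true ∧ okPol φ b

/-- Every occurrence of a knowledge operator `K_i` and of the branching
operator `A` in `φ` is in positive position. -/
def Positive (φ : Formula P A) : Prop := okPol φ true

/-- Derived operators. -/
def Formula.and (φ ψ : Formula P A) : Formula P A := .neg (.or (.neg φ) (.neg ψ))

def Formula.imp (φ ψ : Formula P A) : Formula P A := .or (.neg φ) ψ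

def Formula.iff (φ ψ : Formula P A) : Formula P A := Formula.and (φ.imp ψ) (ψ.imp φ)

/-- The truth constant, expressed in the base syntax. -/
def ttF [Inhabited P] : Formula P A := .or (.atom default) (.neg (.atom default))

/-- `F φ = true U φ`. -/
def Ff [Inhabited P] (φ : Formula P A) : Formula P A := .untl ttF φ

/-- `G φ = ¬ F ¬ φ`. -/
def Gf [Inhabited P] (φ : Formula P A) : Formula P A := .neg (Ff (.neg φ))

/-- `AG φ = A (G φ)`. -/
def AGf [Inhabited P] (φ : Formula P A) : Formula P A := .all (Gf φ)

/-- `AX φ = A (X φ)`. -/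
def AXf (φ : Formula P A) : Formula P A := .all (.next φ)

/-- The fragment CTLK⁺. -/
inductive CTLKp (P A : Type) : Type
  | atom : P → CTLKp P A
  | natom : P → CTLKp P A
  | or : CTLKp P A → CTLKp P A → CTLKp P A
  | and : CTLKp P A → CTLKp P A → CTLKp P A
  | ax : CTLKp P A → CTLKp P A
  | af : CTLKp P A → CTLKp P A
  | ag : CTLKp P A → CTLKp P A
  | au : CTLKp P A → CTLKp P A → CTLKp P A
  | ar : CTLKp P A → CTLKp P A → CTLKp P A
  | know : A → CTLKp P A → CTLKp P A

/-- Expansion of a CTLK⁺ formula into the base CTL*K syntax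
(`AX φ = A X φ`, `AF φ = A (true U φ)`, `AG φ = A ¬(true U ¬φ)`,
`A(φ R ψ) = A ¬((¬φ) U (¬ψ))`, `φ ∧ ψ = ¬(¬φ ∨ ¬ψ)`). -/
def CTLKp.toFormula [Inhabited P] : CTLKp P A → Formula P A
  | .atom p => .atom p
  | .natom p => .neg (.atom p)
  | .or φ ψ => .or φ.toFormula ψ.toFormula
  | .and φ ψ => Formula.and φ.toFormula ψ.toFormula
  | .ax φ => .all (.next φ.toFormula)
  | .af φ => .all (Ff φ.toFormula)
  | .ag φ => .all (Gf φ.toFormula)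
  | .au φ ψ => .all (.untl φ.toFormula ψ.toFormula)
  | .ar φ ψ => .all (.neg (.untl (.neg φ.toFormula) (.neg ψ.toFormula)))
  | .know i φ => .know i φ.toFormula

/-- `φ` is (the expansion of) a formula of the fragment CTLK⁺. -/
def InCTLKplus [Inhabited P] (φ : Formula P A) : Prop :=
  ∃ c : CTLKp P A, c.toFormula = φ

/-- Boolean (purely propositional) formulas. -/
inductive BForm (P : Type) : Type
  | atom : P → BForm P
  | neg : BForm P → BForm P
  | or : BForm P → BForm P → BForm P

/-- Truth of a boolean formula under an assignment (set of true propositions). -/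
def BForm.eval (v : Set P) : BForm P → Prop
  | .atom p => p ∈ v
  | .neg φ => ¬ φ.eval v
  | .or φ ψ => φ.eval v ∨ ψ.eval v

/-- The atomic propositions occurring in a boolean formula. -/
def BForm.atoms : BForm P → Set P
  | .atom p => {p}
  | .neg φ => φ.atoms
  | .or φ ψ => φ.atoms ∪ ψ.atoms

/-- A boolean formula regarded as a CTL*K formula. -/
def BForm.toFormula : BForm P → Formula P A
  | .atom p => .atom p
  | .neg φ => .neg φ.toFormula
  | .or φ ψ => .or φ.toFormula ψ.toFormula

/-- The falsum constant `¬(p ∨ ¬p)`, expressed as a boolean formula. -/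
def ffB [Inhabited P] : BForm P := .neg (.or (.atom default) (.neg (.atom default)))

/-- Conjunction of boolean formulas. -/
def bAnd (φ ψ : BForm P) : BForm P := .neg (.or (.neg φ) (.neg ψ))

end EpiSyn
namespace EpiSyn

variable {S P A Act Obs X : Type}

/-- An environment: initial states, a set of actions for each agent
(containing `skip`), a serial transition relation labelled by joint actions
(with the all-`skip` joint action acting as identity), an observation
function for each agent, and an interpretation of atomic propositions. -/
structure Env (S P A Act Obs : Type) where
  init : Set S
  acts : A → Set Act
  skip : Act
  skip_mem : ∀ i, skip ∈ acts i
  tr : S → (A → Act) → S → Prop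
  serial : ∀ s (a : A → Act), (∀ i, a i ∈ acts i) → ∃ t, tr s a t
  skip_loop : ∀ s t, tr s (fun _ => skip) t ↔ s = t
  obs : A → S → Obs
  intp : S → Set P

/-- Proposition `p` is local to agent `i`: its truth depends only on `i`'s observation. -/
def LocalProp (E : Env S P A Act Obs) (i : A) (p : P) : Prop :=
  ∀ s t, E.obs i s = E.obs i t → (p ∈ E.intp s ↔ p ∈ E.intp t)

/-- A boolean formula is local to agent `i` if all its propositions are. -/
def LocalBForm (E : Env S P A Act Obs) (i : A) (φ : BForm P) : Prop :=
  ∀ p ∈ φ.atoms, LocalProp E i p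

/-- A concrete protocol for one agent: a finite list of guarded clauses `φ → a`. -/
abbrev Proto (P Act : Type) := List (BForm P × Act)

/-- Well-formedness of a joint concrete protocol: clause actions belong to the
agent's action set and guards are local to the agent. -/
def ProtocolWF (E : Env S P A Act Obs) (Q : A → Proto P Act) : Prop :=
  ∀ i, ∀ c ∈ Q i, c.2 ∈ E.acts i ∧ LocalBForm E i c.1

/-- The set of actions enabled by protocol `Pi` at state `s`: the actions of
clauses whose guard holds at `s`; if no guard holds, just `skip`. -/
def en (E : Env S P A Act Obs) (Pi : Proto P Act) (s : S) : Set Act :=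
  {α | (∃ c ∈ Pi, c.2 = α ∧ c.1.eval (E.intp s)) ∨
       (α = E.skip ∧ ∀ c ∈ Pi, ¬ c.1.eval (E.intp s))}

/-- Runs of the joint protocol `Q` in the environment `E`. -/
def sysRuns (E : Env S P A Act Obs) (Q : A → Proto P Act) : Set (ℕ → S) :=
  {r | r 0 ∈ E.init ∧
    ∀ n, ∃ a : A → Act, (∀ i, a i ∈ en E (Q i) (r n)) ∧ E.tr (r n) a (r (n + 1))}

/-- The interpreted system `𝓘(E, Q)` generated by running joint protocol `Q`
in environment `E`, with the observational semantics for knowledge. -/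
def sysIS (E : Env S P A Act Obs) (Q : A → Proto P Act) : IS S P A where
  runs := sysRuns E Q
  sim := fun i p q => E.obs i (p.1 p.2) = E.obs i (q.1 q.2)
  intp := E.intp
  sim_refl := fun _ _ _ _ => rfl
  sim_symm := fun _ _ _ _ _ h => h.symm
  sim_trans := fun _ _ _ _ _ _ _ h h' => h.trans h'

/-- A protocol template for one agent: guards are boolean formulas over the
atomic propositions together with boolean template variables from `X`. -/
abbrev ProtoT (P X Act : Type) := List (BForm (P ⊕ X) × Act)

/-- Well-formedness of a joint protocol template with variable-ownership map
`owner`: clause actions belong to the agent's action set, the atomic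
propositions in guards of agent `i`'s template are local to `i`, and the
template variables occurring in it are owned by `i` (so the variable sets of
distinct agents are disjoint). -/
def TemplateWF (E : Env S P A Act Obs) (owner : X → A)
    (Pt : A → ProtoT P X Act) : Prop :=
  ∀ i, ∀ c ∈ Pt i, c.2 ∈ E.acts i ∧
    ∀ q ∈ c.1.atoms, Sum.elim (fun p => LocalProp E i p) (fun x => owner x = i) q

/-- Application of a (total) substitution to a template guard. -/
def substB (θ : X → BForm P) : BForm (P ⊕ X) → BForm P
  | .atom (.inl p) => .atom p
  | .atom (.inr x) => θ x
  | .neg φ => .neg (substB θ φ)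
  | .or φ ψ => .or (substB θ φ) (substB θ ψ)

/-- Application of a (total) substitution to a joint protocol template,
yielding a joint concrete protocol `Pθ`. -/
def substT (θ : X → BForm P) (Pt : A → ProtoT P X Act) : A → Proto P Act :=
  fun i => (Pt i).map (fun c => (substB θ c.1, c.2))

/-- Application of a (total) substitution to a CTL*K formula over `Prop ∪ X`. -/
def substF (θ : X → BForm P) : Formula (P ⊕ X) A → Formula P A
  | .atom (.inl p) => .atom p
  | .atom (.inr x) => (θ x).toFormula
  | .neg φ => .neg (substF θ φ)
  | .or φ ψ => .or (substF θ φ) (substF θ ψ)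
  | .next φ => .next (substF θ φ)
  | .untl φ ψ => .untl (substF θ φ) (substF θ ψ)
  | .all φ => .all (substF θ φ)
  | .know i φ => .know i (substF θ φ)

/-- A total substitution is well-formed if it assigns to each template
variable a boolean formula local to the agent owning that variable. -/
def SubstWF (E : Env S P A Act Obs) (owner : X → A) (θ : X → BForm P) : Prop :=
  ∀ x, LocalBForm E (owner x) (θ x)

/-- A partial substitution is well-formed if every assigned formula is local
to the agent owning the corresponding variable. -/
def PSubstWF (E : Env S P A Act Obs) (owner : X → A) (θ : X → Option (BForm P)) : Prop :=
  ∀ x b, θ x = some b → LocalBForm E (owner x) b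

end EpiSyn
namespace EpiSyn

/-! ### The picnic environment of Example 2 -/

/-- States: `s0` (start), `sw` (wine only), `sc` (cheese only), `swc` (both). -/
inductive PicSt : Type | s0 | sw | sc | swc
  deriving DecidableEq

instance : Fintype PicSt where
  elems := {PicSt.s0, PicSt.sw, PicSt.sc, PicSt.swc}
  complete := fun x => by cases x <;> simp

/-- Agents Alice and Bob. -/
inductive PicAg : Type | A | B
  deriving DecidableEq

instance : Fintype PicAg where
  elems := {PicAg.A, PicAg.B}
  complete := fun x => by cases x <;> simp

/-- Actions: bring wine, bring cheese, picnic, skip. -/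
inductive PicAc : Type | aw | ac | ap | skip
  deriving DecidableEq

instance : Fintype PicAc where
  elems := {PicAc.aw, PicAc.ac, PicAc.ap, PicAc.skip}
  complete := fun x => by cases x <;> simp

/-- Atomic propositions `start`, `w`, `c`. -/
inductive PicPr : Type | start | w | c
  deriving DecidableEq

instance : Inhabited PicPr := ⟨PicPr.start⟩

/-- The transition relation: from `s0`, both bringing wine leads to `sw`,
both bringing cheese to `sc`, one of each to `swc`, and any other joint
action loops at `s0`; each of `sw`, `sc`, `swc` loops under every joint
action. -/
def picTr : PicSt → (PicAg → PicAc) → PicSt → Prop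
  | .s0, a, t =>
      (a .A = .aw ∧ a .B = .aw ∧ t = .sw) ∨
      (a .A = .ac ∧ a .B = .ac ∧ t = .sc) ∨
      (((a .A = .aw ∧ a .B = .ac) ∨ (a .A = .ac ∧ a .B = .aw)) ∧ t = .swc) ∨
      (¬ (a .A = .aw ∧ a .B = .aw) ∧ ¬ (a .A = .ac ∧ a .B = .ac) ∧
        ¬ ((a .A = .aw ∧ a .B = .ac) ∨ (a .A = .ac ∧ a .B = .aw)) ∧ t = .s0)
  | .sw, _, t => t = .sw
  | .sc, _, t => t = .sc
  | .swc, _, t => t = .swc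

instance : ∀ s a t, Decidable (picTr s a t) := fun s a t => by
  cases s <;> dsimp [picTr] <;> infer_instance

/-- The interpretation: `start` holds at `s0`, `w` at the states with wine,
`c` at the states with cheese. -/
def picIntp : PicSt → Set PicPr
  | .s0 => {PicPr.start}
  | .sw => {PicPr.w}
  | .sc => {PicPr.c}
  | .swc => {PicPr.w, PicPr.c}

/-- The picnic environment: initial state `s0`, all four actions available to
both agents, both agents observe the full state. -/
def picEnv : Env PicSt PicPr PicAg PicAc PicSt where
  init := {PicSt.s0}
  acts := fun _ => Set.univ
  skip := PicAc.skip
  skip_mem := fun _ => Set.mem_univ _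
  tr := picTr
  serial := fun s a _ =>
    (by decide : ∀ (s : PicSt) (a : PicAg → PicAc), ∃ t, picTr s a t) s a
  skip_loop := by decide
  obs := fun _ s => s
  intp := picIntp

/-- Agent `i`'s protocol template:
`do start ∧ x_i → ac [] start ∧ ¬x_i → aw [] ¬start → ap od`,
with template variable `x_i` identified with the agent `i` itself. -/
def picTemplate : PicAg → ProtoT PicPr PicAg PicAc := fun i =>
  [ (bAnd (BForm.atom (Sum.inl PicPr.start)) (BForm.atom (Sum.inr i)), PicAc.ac),
    (bAnd (BForm.atom (Sum.inl PicPr.start)) (BForm.neg (BForm.atom (Sum.inr i))), PicAc.aw),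
    (BForm.neg (BForm.atom (Sum.inl PicPr.start)), PicAc.ap) ]

section Aux

open Classical

variable {S P A : Type}

lemma sat_bform (I : IS S P A) (b : BForm P) (r : ℕ → S) (m : ℕ) :
    sat I (BForm.toFormula b) r m ↔ b.eval (I.intp (r m)) := by
  induction b with
  | atom p => exact Iff.rfl
  | neg φ ih => exact not_congr ih
  | or φ ψ ih1 ih2 => exact or_congr ih1 ih2

lemma sat_iff_iff (I : IS S P A) (φ κ : Formula P A) (r : ℕ → S) (m : ℕ) :
    sat I (Formula.iff φ κ) r m ↔ (sat I φ r m ↔ sat I κ r m) := by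
  simp only [Formula.iff, Formula.and, Formula.imp, sat]
  tauto

lemma spec_at_zero [Inhabited P] (I : IS S P A) (ψ : Formula P A) (r : ℕ → S)
    (hr : r ∈ I.runs) (hv : valid I (AGf ψ)) : sat I ψ r 0 := by
  have h : sat I (Gf ψ) r 0 := hv r hr r hr (fun k _ => rfl)
  by_contra hc
  exact h ⟨0, le_rfl, hc, fun k h1 h2 => absurd h2 (by omega)⟩

lemma pic_en_s0 (θ : PicAg → BForm PicPr) (i : PicAg) (α : PicAc) :
    α ∈ en picEnv (substT θ picTemplate i) PicSt.s0 ↔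
      (((θ i).eval (picIntp PicSt.s0) ∧ α = PicAc.ac) ∨
       (¬ (θ i).eval (picIntp PicSt.s0) ∧ α = PicAc.aw)) := by
  have hs : PicPr.start ∈ picIntp PicSt.s0 := rfl
  simp only [en, substT, picTemplate, List.map_cons, List.map_nil, substB, bAnd,
    Set.mem_setOf_eq, List.mem_cons, List.not_mem_nil, BForm.eval, picEnv]
  constructor
  · rintro (⟨c, (hc | hc | hc | hc), h2, h1⟩ | ⟨rfl, hskip⟩)
    · subst hc; simp only [BForm.eval, hs] at h1; tauto
    · subst hc; simp only [BForm.eval, hs] at h1; tauto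
    · subst hc; simp only [BForm.eval, hs] at h1; tauto
    · exact absurd hc (by simp)
    · by_cases hp : (θ i).eval (picIntp PicSt.s0)
      · exact absurd (by simp [BForm.eval, hs, hp] : _) (hskip _ (Or.inl rfl))
      · exact absurd (by simp [BForm.eval, hs, hp] : _) (hskip _ (Or.inr (Or.inl rfl)))
  · rintro (⟨hp, rfl⟩ | ⟨hp, rfl⟩)
    · exact Or.inl ⟨_, Or.inl rfl, rfl, by simp [BForm.eval, hs, hp]⟩
    · exact Or.inl ⟨_, Or.inr (Or.inl rfl), rfl, by simp [BForm.eval, hs, hp]⟩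

lemma pic_succ_w (θ : PicAg → BForm PicPr)
    (hAB : ¬ ((θ PicAg.A).eval (picIntp PicSt.s0) ∧ (θ PicAg.B).eval (picIntp PicSt.s0)))
    (r : ℕ → PicSt) (hr : r ∈ sysRuns picEnv (substT θ picTemplate))
    (n : ℕ) (hn : r n = PicSt.s0) :
    PicPr.w ∈ picIntp (r (n + 1)) := by
  obtain ⟨a, hen, htr⟩ := hr.2 n
  rw [hn] at hen htr
  have hA := (pic_en_s0 θ PicAg.A (a PicAg.A)).1 (hen PicAg.A)
  have hB := (pic_en_s0 θ PicAg.B (a PicAg.B)).1 (hen PicAg.B)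
  have htr' : picTr PicSt.s0 a (r (n + 1)) := htr
  rcases hA with ⟨pA, haA⟩ | ⟨pA, haA⟩ <;> rcases hB with ⟨pB, haB⟩ | ⟨pB, haB⟩
  · exact absurd ⟨pA, pB⟩ hAB
  · simp only [picTr, haA, haB] at htr'
    simp only [show r (n+1) = PicSt.swc by tauto, picIntp]; simp
  · simp only [picTr, haA, haB] at htr'
    simp only [show r (n+1) = PicSt.swc by tauto, picIntp]; simp
  · simp only [picTr, haA, haB] at htr'
    simp only [show r (n+1) = PicSt.sw by tauto, picIntp]; simp

lemma pic_mem_runs (θ : PicAg → BForm PicPr) (t : PicSt) (a0 : PicAg → PicAc)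
    (hen : ∀ i, a0 i ∈ en picEnv (substT θ picTemplate i) PicSt.s0)
    (htr : picTr PicSt.s0 a0 t) (ht : t ≠ PicSt.s0) :
    (fun n => if n = 0 then PicSt.s0 else t) ∈ sysRuns picEnv (substT θ picTemplate) := by
  constructor
  · simp [picEnv]
  · intro n
    cases n with
    | zero => exact ⟨a0, by simpa using hen, by simpa [picEnv] using htr⟩
    | succ n =>
        refine ⟨fun _ => PicAc.ap, fun i => ?_, ?_⟩
        · left
          refine ⟨(substB θ (BForm.neg (BForm.atom (Sum.inl PicPr.start))), PicAc.ap),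
            ?_, rfl, ?_⟩
          · simp [substT, picTemplate]
          · show ¬ (PicPr.start ∈ picEnv.intp _)
            simp only [Nat.succ_ne_zero, if_false]
            cases t with
            | s0 => exact absurd rfl ht
            | sw => simp [picEnv, picIntp]
            | sc => simp [picEnv, picIntp]
            | swc => simp [picEnv, picIntp]
        · show picTr (if n + 1 = 0 then _ else t) _ (if n + 2 = 0 then _ else t)
          simp only [Nat.succ_ne_zero, if_false]
          cases t with
          | s0 => exact absurd rfl ht
          | sw => simp [picTr]
          | sc => simp [picTr]
          | swc => simp [picTr]

end Aux

/-- Example 2 of the paper. There is no substitution `θ`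
(assigning to each template variable `x_i` a boolean formula local to agent
`i`) such that `𝓘(E,Pθ) ⊨ AG(θ(x_i) ⇔ K_i (AX w))` for both `i = A` and
`i = B`: the picnic knowledge-based program has no implementation. -/
theorem picnic_no_implementation :
    ¬ ∃ θ : PicAg → BForm PicPr,
      (∀ i, LocalBForm picEnv i (θ i)) ∧
      ∀ i : PicAg,
        valid (sysIS picEnv (substT θ picTemplate))
          (AGf (Formula.iff ((θ i).toFormula)
            (Formula.know i (AXf (Formula.atom PicPr.w))))) := by
  rintro ⟨θ, -, hvalid⟩
  by_cases hA : (θ PicAg.A).eval (picIntp PicSt.s0) <;>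
    by_cases hB : (θ PicAg.B).eval (picIntp PicSt.s0)
  -- Case 1: both true — both bring cheese, K (AX w) fails at the start.
  · have hen : ∀ i, PicAc.ac ∈ en picEnv (substT θ picTemplate i) PicSt.s0 :=
      fun i => (pic_en_s0 θ i _).2 (Or.inl ⟨by cases i <;> assumption, rfl⟩)
    have htr : picTr PicSt.s0 (fun _ => PicAc.ac) PicSt.sc := by simp [picTr]
    have hr := pic_mem_runs θ PicSt.sc _ hen htr (by simp)
    have hsp := (sat_iff_iff _ _ _ _ _).1
      (spec_at_zero _ _ _ hr (hvalid PicAg.A))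
    have hθ : sat (sysIS picEnv (substT θ picTemplate)) (BForm.toFormula (θ PicAg.A))
        (fun n => if n = 0 then PicSt.s0 else PicSt.sc) 0 :=
      (sat_bform _ _ _ _).2 hA
    have hK := hsp.1 hθ
    have := hK _ hr 0 rfl _ hr (fun k _ => rfl)
    simp [sat, sysIS, picEnv, picIntp] at this
  -- Case 2: A true, B false — mixed actions, K (AX w) holds but x_B is false.
  · have henA : PicAc.ac ∈ en picEnv (substT θ picTemplate PicAg.A) PicSt.s0 :=
      (pic_en_s0 θ _ _).2 (Or.inl ⟨hA, rfl⟩)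
    have henB : PicAc.aw ∈ en picEnv (substT θ picTemplate PicAg.B) PicSt.s0 :=
      (pic_en_s0 θ _ _).2 (Or.inr ⟨hB, rfl⟩)
    have htr : picTr PicSt.s0
        (fun i => match i with | PicAg.A => PicAc.ac | PicAg.B => PicAc.aw) PicSt.swc := by
      simp [picTr]
    have hr := pic_mem_runs θ PicSt.swc _
      (fun i => by cases i <;> assumption) htr (by simp)
    have hsp := (sat_iff_iff _ _ _ _ _).1
      (spec_at_zero _ _ _ hr (hvalid PicAg.B))
    have hK : sat (sysIS picEnv (substT θ picTemplate))
        (Formula.know PicAg.B (AXf (Formula.atom PicPr.w)))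
        (fun n => if n = 0 then PicSt.s0 else PicSt.swc) 0 := by
      intro r' hr' m' hsim r'' hr'' hag
      have h0 : r'' m' = PicSt.s0 := by rw [hag m' le_rfl]; exact hsim
      exact pic_succ_w θ (fun h => hB h.2) r'' hr'' m' h0
    exact hB ((sat_bform _ _ _ _).1 (hsp.2 hK))
  -- Case 3: A false, B true — symmetric to case 2.
  · have henA : PicAc.aw ∈ en picEnv (substT θ picTemplate PicAg.A) PicSt.s0 :=
      (pic_en_s0 θ _ _).2 (Or.inr ⟨hA, rfl⟩)
    have henB : PicAc.ac ∈ en picEnv (substT θ picTemplate PicAg.B) PicSt.s0 :=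
      (pic_en_s0 θ _ _).2 (Or.inl ⟨hB, rfl⟩)
    have htr : picTr PicSt.s0
        (fun i => match i with | PicAg.A => PicAc.aw | PicAg.B => PicAc.ac) PicSt.swc := by
      simp [picTr]
    have hr := pic_mem_runs θ PicSt.swc _
      (fun i => by cases i <;> assumption) htr (by simp)
    have hsp := (sat_iff_iff _ _ _ _ _).1
      (spec_at_zero _ _ _ hr (hvalid PicAg.A))
    have hK : sat (sysIS picEnv (substT θ picTemplate))
        (Formula.know PicAg.A (AXf (Formula.atom PicPr.w)))
        (fun n => if n = 0 then PicSt.s0 else PicSt.swc) 0 := by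
      intro r' hr' m' hsim r'' hr'' hag
      have h0 : r'' m' = PicSt.s0 := by rw [hag m' le_rfl]; exact hsim
      exact pic_succ_w θ (fun h => hA h.1) r'' hr'' m' h0
    exact hA ((sat_bform _ _ _ _).1 (hsp.2 hK))
  -- Case 4: both false — both bring wine, K (AX w) holds but x_A is false.
  · have hen : ∀ i, PicAc.aw ∈ en picEnv (substT θ picTemplate i) PicSt.s0 :=
      fun i => (pic_en_s0 θ i _).2 (Or.inr ⟨by cases i <;> assumption, rfl⟩)
    have htr : picTr PicSt.s0 (fun _ => PicAc.aw) PicSt.sw := by simp [picTr]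
    have hr := pic_mem_runs θ PicSt.sw _ hen htr (by simp)
    have hsp := (sat_iff_iff _ _ _ _ _).1
      (spec_at_zero _ _ _ hr (hvalid PicAg.A))
    have hK : sat (sysIS picEnv (substT θ picTemplate))
        (Formula.know PicAg.A (AXf (Formula.atom PicPr.w)))
        (fun n => if n = 0 then PicSt.s0 else PicSt.sw) 0 := by
      intro r' hr' m' hsim r'' hr'' hag
      have h0 : r'' m' = PicSt.s0 := by rw [hag m' le_rfl]; exact hsim
      exact pic_succ_w θ (fun h => hA h.1) r'' hr'' m' h0
    exact hA ((sat_bform _ _ _ _).1 (hsp.2 hK))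

end EpiSyn
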